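/- Let G be a finite group and A a complete local ring with residue field κ of characteristic prime to the order of G. Then for n ≥ 1, the group cohomology map Hⁿ(G, A^×) → Hⁿ(G, κ^×) induced by the quotient A → κ is an isomorphism, where G acts trivially on both A^× and κ^×. -/

import Mathlib

open CategoryTheory

/-- The map of inhomogeneous cochain complexes induced by a morphism of representations,
given by postcomposition. -/
noncomputable def cochainsMap {k G : Type} [CommRing k] [Group G]
    {A B : Rep k G} (f : A ⟶ B) :
    groupCohomology.inhomogeneousCochains A ⟶ groupCohomology.inhomogeneousCochains B where
  f n := ModuleCat.ofHom ((f.hom : A →ₗ[k] B).compLeft (Fin n → G))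
  comm' i j hij := by
    obtain rfl : i + 1 = j := hij
    rw [groupCohomology.inhomogeneousCochains.d_def, groupCohomology.inhomogeneousCochains.d_def]
    ext (x : (Fin i → G) → A)
    simp [inhomogeneousCochains.d_hom_apply, LinearMap.compLeft, map_sum, Rep.hom_comm_apply, Function.comp_def]

/-- The map on group cohomology induced by a morphism of representations. -/
noncomputable def groupCohomologyMap {k G : Type} [CommRing k] [Group G]
    {A B : Rep k G} (f : A ⟶ B) (n : ℕ) :
    groupCohomology A n ⟶ groupCohomology B n :=
  HomologicalComplex.homologyMap (cochainsMap f) n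

/-- The morphism of trivial representations induced by a linear map. -/
def trivialRepHom {k G : Type} [CommRing k] [Group G]
    {M N : Type} [AddCommGroup M] [Module k M] [AddCommGroup N] [Module k N]
    (f : M →ₗ[k] N) : Rep.trivial k G M ⟶ Rep.trivial k G N :=
  Rep.ofHom ⟨f, fun _ => rfl⟩

/-- The `ℤ`-linear map on (additivized) unit groups induced by a ring homomorphism. -/
def unitsMapLinear {A B : Type} [CommRing A] [CommRing B] (f : A →+* B) :
    Additive Aˣ →ₗ[ℤ] Additive Bˣ :=
  (MonoidHom.toAdditive (Units.map (f : A →* B))).toIntLinearMap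

/-! ### Auxiliary lemmas: local algebra -/

section LocalAlg

open IsLocalRing Polynomial

variable {A : Type} [CommRing A] [IsLocalRing A]

lemma aux_isUnit_of_residue_ne_zero {a : A} (h : residue A a ≠ 0) : IsUnit a := by
  by_contra hu
  exact h (Ideal.Quotient.eq_zero_iff_mem.2 ((mem_maximalIdeal a).2 hu))

lemma aux_unitsMap_residue_surjective :
    Function.Surjective (Units.map ((residue A : A →+* ResidueField A) : A →* ResidueField A)) := by
  intro u
  obtain ⟨a, ha⟩ := Ideal.Quotient.mk_surjective (u : ResidueField A)
  have ha' : residue A a = (u : ResidueField A) := ha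
  have hu : IsUnit a := aux_isUnit_of_residue_ne_zero (by rw [ha']; exact u.ne_zero)
  refine ⟨hu.unit, Units.ext ?_⟩
  simpa using ha'

/-- The kernel of `Aˣ → κˣ`. -/
noncomputable def resKer (A : Type) [CommRing A] [IsLocalRing A] : Subgroup Aˣ :=
  MonoidHom.ker (Units.map ((residue A : A →+* ResidueField A) : A →* ResidueField A))

lemma resKer_residue_eq_one {u : Aˣ} (hu : u ∈ resKer A) : residue A (u : A) = 1 := by
  have : (Units.map ((residue A : A →+* ResidueField A) : A →* ResidueField A)) u = 1 := hu
  exact congrArg Units.val this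

lemma resKer_pow_injective {N : ℕ} (hN : (N : ResidueField A) ≠ 0) :
    Function.Injective (fun x : resKer A => x ^ N) := by
  have key : ∀ w : resKer A, w ^ N = 1 → w = 1 := by
    rintro ⟨w, hw⟩ h1
    have hwN : ((w : A)) ^ N = 1 := by
      have : (w ^ N : Aˣ) = 1 := congrArg Subtype.val h1
      simpa using congrArg Units.val this
    have hres : residue A (w : A) = 1 := resKer_residue_eq_one hw
    have hsum : IsUnit (∑ i ∈ Finset.range N, (w : A) ^ i) := by
      apply aux_isUnit_of_residue_ne_zero
      have : residue A (∑ i ∈ Finset.range N, (w : A) ^ i) = N := by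
        rw [map_sum]
        simp [map_pow, hres]
      rw [this]; exact hN
    have h0 : (∑ i ∈ Finset.range N, (w : A) ^ i) * ((w : A) - 1) = 0 := by
      rw [geom_sum_mul, hwN, sub_self]
    have : (w : A) - 1 = 0 := (hsum.mul_right_eq_zero).1 h0
    have : (w : A) = 1 := by rwa [sub_eq_zero] at this
    exact Subtype.ext (Units.ext (by simpa using this))
  intro x y hxy
  simp only at hxy
  have h : (x * y⁻¹) ^ N = 1 := by
    rw [mul_pow, inv_pow, hxy]
    simp
  exact mul_inv_eq_one.mp (key _ h)

lemma resKer_pow_surjective [IsAdicComplete (maximalIdeal A) A]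
    {N : ℕ} (hN : (N : ResidueField A) ≠ 0) :
    Function.Surjective (fun x : resKer A => x ^ N) := by
  have hN0 : N ≠ 0 := by rintro rfl; simp at hN
  rintro ⟨v, hv⟩
  have hres : residue A (v : A) = 1 := resKer_residue_eq_one hv
  set f : A[X] := X ^ N - C (v : A) with hf
  have hmonic : f.Monic := monic_X_pow_sub_C _ hN0
  have h₁ : f.eval 1 ∈ maximalIdeal A := by
    have : residue A (f.eval 1) = 0 := by
      simp [hf, hres]
    exact Ideal.Quotient.eq_zero_iff_mem.1 this
  have h₂ : IsUnit ((Ideal.Quotient.mk (maximalIdeal A)) (f.derivative.eval 1)) := by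
    have : (Ideal.Quotient.mk (maximalIdeal A)) (f.derivative.eval 1) = (N : ResidueField A) := by
      simp [hf, derivative_X_pow]
      rfl
    rw [this]
    exact isUnit_iff_ne_zero.2 hN
  obtain ⟨a, ha, ha1⟩ := HenselianRing.is_henselian f hmonic 1 h₁ h₂
  have haN : a ^ N = (v : A) := by
    have := ha
    simp only [hf, IsRoot, eval_sub, eval_pow, eval_X, eval_C, sub_eq_zero] at this
    exact this
  have hua : IsUnit a := (isUnit_pow_iff hN0).1 (haN ▸ v.isUnit)
  have hresa : residue A a = 1 := by
    have : residue A (a - 1) = 0 := Ideal.Quotient.eq_zero_iff_mem.2 ha1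
    rw [map_sub] at this
    simpa [sub_eq_zero] using this
  have hmem : hua.unit ∈ resKer A := by
    refine Units.ext ?_
    simpa using hresa
  refine ⟨⟨hua.unit, hmem⟩, ?_⟩
  simp only
  refine Subtype.ext (Units.ext ?_)
  simp [haN]

end LocalAlg

/-! ### Auxiliary lemmas: vanishing of cohomology of trivial representations -/

section Vanishing

open Finset groupCohomology

variable {G : Type} [Group G] [Fintype G] {M : Type} [AddCommGroup M] {p : ℕ}

lemma aux_contractNth_zero_cons {α : Type*} (op : α → α → α) (x : α) (g : Fin (p + 1) → α) :
    Fin.contractNth 0 op (Fin.cons x g) = Fin.cons (op x (g 0)) (fun i => g i.succ) := by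
  funext k
  refine Fin.cases ?_ (fun k => ?_) k
  · rw [Fin.contractNth_apply_of_eq _ _ _ _ (by simp)]; simp
  · rw [Fin.contractNth_apply_of_gt _ _ _ _ (by simp)]; simp

lemma aux_contractNth_succ_cons {α : Type*} (j : Fin (p + 1)) (op : α → α → α) (x : α)
    (g : Fin (p + 1) → α) :
    Fin.contractNth j.succ op (Fin.cons x g) = Fin.cons x (Fin.contractNth j op g) := by
  funext k
  refine Fin.cases ?_ (fun k => ?_) k
  · rw [Fin.contractNth_apply_of_lt _ _ _ _ (by simp)]; simp
  · simp only [Fin.cons_succ]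
    rcases lt_trichotomy (k : ℕ) (j : ℕ) with h | h | h
    · rw [Fin.contractNth_apply_of_lt _ _ _ _ (by simpa using h),
        Fin.contractNth_apply_of_lt _ _ _ _ h, ← Fin.succ_castSucc, Fin.cons_succ]
    · rw [Fin.contractNth_apply_of_eq _ _ _ _ (by simpa using h),
        Fin.contractNth_apply_of_eq _ _ _ _ h, ← Fin.succ_castSucc, Fin.cons_succ, Fin.cons_succ]
    · rw [Fin.contractNth_apply_of_gt _ _ _ _ (by simpa using h),
        Fin.contractNth_apply_of_gt _ _ _ _ h, Fin.cons_succ]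

lemma aux_homotopy_identity (f : (Fin (p + 1) → G) → M) (g : Fin (p + 1) → G) :
    inhomogeneousCochains.d (Rep.trivial ℤ G M) p (fun h => ∑ x : G, f (Fin.cons x h)) g
      + ∑ x : G, inhomogeneousCochains.d (Rep.trivial ℤ G M) (p + 1) f (Fin.cons x g)
    = (Fintype.card G : ℤ) • f g := by
  simp only [inhomogeneousCochains.d_hom_apply, Representation.trivial_apply]
  have hconssucc : ∀ x : G,
      (fun (i : Fin (p+1)) => (Fin.cons x g : Fin (p+2) → G) (Fin.succ i)) = g := by
    intro x; funext i; simp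
  simp only [hconssucc]
  have hsplit : ∀ x : G,
      (∑ j : Fin (p + 2), ((-1 : ℤ)) ^ ((j : ℕ) + 1) •
          f (Fin.contractNth j (· * ·) (Fin.cons x g)))
      = -f (Fin.cons (x * g 0) (fun i => g i.succ))
        + ∑ j : Fin (p + 1), (-1 : ℤ) ^ ((j : ℕ)) •
            f (Fin.cons x (Fin.contractNth j (· * ·) g)) := by
    intro x
    rw [Fin.sum_univ_succ]
    congr 1
    · rw [aux_contractNth_zero_cons]
      simp
    · refine Finset.sum_congr rfl (fun j _ => ?_)
      rw [aux_contractNth_succ_cons]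
      have : ((-1 : ℤ)) ^ ((j.succ : ℕ) + 1) = (-1 : ℤ) ^ (j : ℕ) := by
        rw [Fin.val_succ]
        ring
      rw [this]
  simp only [hsplit, Finset.sum_add_distrib]
  have hre : ∑ x : G, -f (Fin.cons (x * g 0) (fun i => g i.succ))
      = -∑ x : G, f (Fin.cons x (fun i => g i.succ)) := by
    rw [← Finset.sum_neg_distrib]
    exact Fintype.sum_equiv (Equiv.mulRight (g 0)) _ _ (fun x => rfl)
  rw [hre]
  rw [Finset.sum_comm (γ := G) (s := univ) (t := univ)]
  have hswap : ∑ j : Fin (p + 1), ∑ x : G,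
      (-1 : ℤ) ^ ((j : ℕ)) • f (Fin.cons x (Fin.contractNth j (· * ·) g))
      = -∑ j : Fin (p + 1), (-1 : ℤ) ^ ((j : ℕ) + 1) •
          (∑ x : G, f (Fin.cons x (Fin.contractNth j (· * ·) g))) := by
    rw [← Finset.sum_neg_distrib]
    refine Finset.sum_congr rfl (fun j _ => ?_)
    rw [← Finset.smul_sum]
    rw [pow_succ]
    simp [neg_smul]
  rw [hswap]
  simp only [Finset.sum_const, Finset.card_univ]
  rw [natCast_zsmul]
  abel

lemma aux_exactAt_trivial_cochains
    (hbij : Function.Bijective (fun m : M => (Fintype.card G : ℤ) • m)) (p : ℕ) :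
    (inhomogeneousCochains (Rep.trivial ℤ G M)).ExactAt (p + 1) := by
  rw [HomologicalComplex.exactAt_iff' _ p (p + 1) (p + 2) (by simp) (by simp)]
  rw [ShortComplex.moduleCat_exact_iff]
  intro (f : (Fin (p + 1) → G) → M) hf
  have hf' : inhomogeneousCochains.d (Rep.trivial ℤ G M) (p + 1) f = 0 := by
    have : (inhomogeneousCochains (Rep.trivial ℤ G M)).d (p + 1) (p + 2) f = 0 := hf
    rwa [groupCohomology.inhomogeneousCochains.d_def] at this
  set e : M ≃ M := Equiv.ofBijective _ hbij with he
  refine ⟨(fun h => e.symm (∑ x : G, f (Fin.cons x h)) : (Fin p → G) → M), ?_⟩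
  show (inhomogeneousCochains (Rep.trivial ℤ G M)).d p (p + 1) _ = f
  rw [groupCohomology.inhomogeneousCochains.d_def]
  funext g
  apply hbij.1
  show (Fintype.card G : ℤ) • _ = (Fintype.card G : ℤ) • f g
  have harg : (Fintype.card G : ℤ) • (fun h => e.symm (∑ x : G, f (Fin.cons x h)))
      = (fun (h : Fin p → G) => ∑ x : G, f (Fin.cons x h)) := by
    funext h
    exact e.apply_symm_apply _
  have hNe : (Fintype.card G : ℤ) •
      (inhomogeneousCochains.d (Rep.trivial ℤ G M) p
        (fun h => e.symm (∑ x : G, f (Fin.cons x h))) g)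
      = inhomogeneousCochains.d (Rep.trivial ℤ G M) p
        (fun h => ∑ x : G, f (Fin.cons x h)) g := by
    rw [← Pi.smul_apply, ← map_smul, harg]
  have hz : inhomogeneousCochains.d (Rep.trivial ℤ G M) p
      (fun h => ∑ x : G, f (Fin.cons x h)) g = (Fintype.card G : ℤ) • f g := by
    rw [← aux_homotopy_identity f g, hf']
    simp
    exact Finset.sum_eq_zero fun _ _ => rfl
  exact hNe.trans hz

end Vanishing

/-! ### Main theorem -/

/-- Let `G` be a finite group and `A` a complete local ring with residue field `κ` of
characteristic prime to the order of `G`.  Then for `n ≥ 1`, the group cohomology map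
`Hⁿ(G, A^×) → Hⁿ(G, κ^×)` induced by the quotient `A → κ` is an isomorphism, where
`G` acts trivially on both `A^×` and `κ^×`. -/
theorem groupCohomology_units_of_complete_local_ring_iso
    (G : Type) [Group G] [Finite G]
    (A : Type) [CommRing A] [IsLocalRing A]
    [IsAdicComplete (IsLocalRing.maximalIdeal A) A]
    (hchar : (Nat.card G : IsLocalRing.ResidueField A) ≠ 0)
    (n : ℕ) (hn : 1 ≤ n) :
    IsIso (groupCohomologyMap
      (trivialRepHom (G := G) (unitsMapLinear (IsLocalRing.residue A))) n) := by
  classical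
  have : Fintype G := Fintype.ofFinite G
  have hcard : Nat.card G = Fintype.card G := Nat.card_eq_fintype_card
  rw [hcard] at hchar
  set N := Fintype.card G with hNdef
  -- the inclusion of the kernel
  set ι : Additive (resKer A) →ₗ[ℤ] Additive Aˣ :=
    (MonoidHom.toAdditive ((resKer A).subtype)).toIntLinearMap with hι
  set π : Additive Aˣ →ₗ[ℤ] Additive (IsLocalRing.ResidueField A)ˣ :=
    unitsMapLinear (IsLocalRing.residue A) with hπ
  -- the short exact sequence of cochain complexes
  have hzero : cochainsMap (trivialRepHom (G := G) ι) ≫ cochainsMap (trivialRepHom (G := G) π)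
      = 0 := by
    ext m : 1
    refine ModuleCat.hom_ext (LinearMap.ext fun (x : (Fin m → G) → Additive (resKer A)) => ?_)
    funext h
    show π (ι (x h)) = 0
    have h1 : Units.map ((IsLocalRing.residue A : A →+* IsLocalRing.ResidueField A) :
          A →* IsLocalRing.ResidueField A) ((Additive.toMul (x h)).val) = 1 :=
      (Additive.toMul (x h)).2
    show Additive.ofMul (Units.map _ _) = 0
    have h2 : Additive.toMul (ι (x h)) = (Additive.toMul (x h)).val := rfl
    rw [h2, h1]
    rfl
  set S : ShortComplex (HomologicalComplex (ModuleCat ℤ) (ComplexShape.up ℕ)) :=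
    ShortComplex.mk (cochainsMap (trivialRepHom (G := G) ι))
      (cochainsMap (trivialRepHom (G := G) π)) hzero with hS
  have hιinj : Function.Injective ι := by
    intro a b hab
    exact Additive.toMul.injective (Subtype.ext (congrArg Additive.toMul hab))
  have hπsurj : Function.Surjective π := by
    intro u
    obtain ⟨v, hv⟩ := aux_unitsMap_residue_surjective (A := A) (Additive.toMul u)
    exact ⟨Additive.ofMul v, congrArg Additive.ofMul hv⟩
  have hSE : S.ShortExact := by
    apply HomologicalComplex.shortExact_of_degreewise_shortExact
    intro i
    have hm : Mono (S.map (HomologicalComplex.eval _ _ i)).f := by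
      rw [ModuleCat.mono_iff_injective]
      show Function.Injective (fun x => ⇑ι ∘ x)
      exact Function.Injective.comp_left hιinj
    have he : Epi (S.map (HomologicalComplex.eval _ _ i)).g := by
      rw [ModuleCat.epi_iff_surjective]
      exact Function.Surjective.comp_left hπsurj
    have hex : (S.map (HomologicalComplex.eval _ _ i)).Exact := by
      rw [ShortComplex.moduleCat_exact_iff]
      intro (x : (Fin i → G) → Additive Aˣ) hx
      have hmem : ∀ h : Fin i → G, Additive.toMul (x h) ∈ resKer A := by
        intro h
        have h0 : π (x h) = 0 := congrFun hx h
        exact congrArg Additive.toMul h0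
      refine ⟨(fun h => Additive.ofMul (⟨Additive.toMul (x h), hmem h⟩ : resKer A) :
        (Fin i → G) → Additive (resKer A)), ?_⟩
      funext h
      rfl
    exact { exact := hex, mono_f := hm, epi_g := he }
  -- vanishing of the cohomology of the kernel complex
  have hbij : Function.Bijective
      (fun m : Additive (resKer A) => (N : ℤ) • m) := by
    have heq : (fun m : Additive (resKer A) => (N : ℤ) • m)
        = fun m => Additive.ofMul ((Additive.toMul m) ^ N) := by
      funext m
      apply Additive.toMul.injective
      show Additive.toMul m ^ (N : ℤ) = _
      rw [zpow_natCast]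
      rfl
    rw [heq]
    have hpow : Function.Bijective (fun x : resKer A => x ^ N) :=
      ⟨resKer_pow_injective hchar, resKer_pow_surjective hchar⟩
    exact Additive.ofMul.bijective.comp (hpow.comp Additive.toMul.bijective)
  have hexact : ∀ p : ℕ, 1 ≤ p → S.X₁.ExactAt p := by
    intro p hp
    obtain ⟨q, rfl⟩ := Nat.exists_eq_add_of_le' hp
    exact aux_exactAt_trivial_cochains hbij q
  have hz1 : Limits.IsZero (S.X₁.homology n) :=
    (HomologicalComplex.exactAt_iff_isZero_homology _ _).1 (hexact n hn)
  have hz2 : Limits.IsZero (S.X₁.homology (n + 1)) :=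
    (HomologicalComplex.exactAt_iff_isZero_homology _ _).1 (hexact (n + 1) (by omega))
  have h2 := hSE.homology_exact₂ n
  have h3 := hSE.homology_exact₃ n (n + 1) (by simp)
  have hf0 : HomologicalComplex.homologyMap S.f n = 0 := hz1.eq_of_src _ _
  have hδ0 : hSE.δ n (n + 1) (by simp) = 0 := hz2.eq_of_tgt _ _
  have hmono : Mono (HomologicalComplex.homologyMap S.g n) := h2.mono_g hf0
  have hepi : Epi (HomologicalComplex.homologyMap S.g n) := h3.epi_f hδ0
  exact isIso_of_mono_of_epi (HomologicalComplex.homologyMap S.g n)
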